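/- arXiv:math/9902127 — 2 statements merged into one kernel-verified Lean document; each statement's English description precedes it below -/
import Mathlib

section
/- Let 𝔤 be a Lie algebra over a field K and let k ≥ 1. On the vector space V = 𝔤 × Kᵏ define a (k+2)-linear alternating bracket determined by: [(y₁,0),(y₂,0),(0,e₁),…,(0,eₖ)] = ([y₁,y₂]_𝔤, 0) for y₁,y₂ ∈ 𝔤, where e₁,…,eₖ is the standard basis of Kᵏ, and all other brackets of basis-type elements obtained from elements of 𝔤×{0} and {0}×Kᵏ vanish unless exactly two arguments lie in 𝔤×{0} and the remaining k arguments span {0}×Kᵏ. Then this bracket satisfies the Filippov identity, making V a Filippov (k+2)-algebra. -/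
/-- The Filippov (fundamental) identity for an `(n+1)`-ary alternating bracket. -/
def FilippovIdentity {K V : Type*} [Field K] [AddCommGroup V] [Module K V] {n : ℕ}
    (B : AlternatingMap K V V (Fin (n + 1))) : Prop :=
  ∀ (f : Fin n → V) (g : Fin (n + 1) → V),
    B (Fin.snoc f (B g)) = ∑ i, B (Function.update g i (B (Fin.snoc f (g i))))

open scoped Classical
namespace LTVAux
set_option linter.unusedSectionVars false
open Fin Function

variable {K L : Type*} [Field K] [LieRing L] [Module K L] [LieAlgebra K L] {k : ℕ}
variable (B : AlternatingMap K (L × (Fin k → K)) (L × (Fin k → K)) (Fin (k + 1 + 1)))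

def H1 : Prop := ∀ y₁ y₂ : L,
      B (Fin.cons (y₁, 0) (Fin.cons (y₂, 0) (fun i : Fin k => ((0 : L), Pi.single i (1 : K)))))
        = (⁅y₁, y₂⁆, 0)

variable {B}

lemma lemA (h1 : H1 B) (y z : L) (a : Fin k → Fin k → K) :
    B (Fin.cons (y, 0) (Fin.cons (z, 0) fun i => ((0 : L), a i)))
      = (Matrix.detRowAlternating a • ⁅y, z⁆, (0 : Fin k → K)) := by
  have key : ((B.curryLeft (y, 0)).curryLeft (z, 0)).compLinearMap
        (LinearMap.inr K L (Fin k → K))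
      = (LinearMap.prod (LinearMap.toSpanSingleton K L ⁅y, z⁆) 0).compAlternatingMap
          Matrix.detRowAlternating := by
    refine Module.Basis.ext_alternating (Pi.basisFun K (Fin k)) (fun v hv => ?_)
    set σ : Equiv.Perm (Fin k) := Equiv.ofBijective v (Finite.injective_iff_bijective.mp hv)
      with hσdef
    have hσ : (fun i => (Pi.basisFun K (Fin k)) (v i))
        = (fun i => (Pi.basisFun K (Fin k)) i) ∘ σ := rfl
    rw [hσ, AlternatingMap.map_perm, AlternatingMap.map_perm]
    congr 1
    have he : (fun i : Fin k => (Pi.basisFun K (Fin k)) i)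
        = fun i : Fin k => ((Pi.single i (1 : K)) : Fin k → K) := by
      funext i
      simp [Pi.basisFun_apply]
    rw [he]
    have hdet : Matrix.detRowAlternating (fun i : Fin k => (Pi.single i (1 : K) : Fin k → K))
        = 1 := by
      have h1m : (Matrix.of fun i j : Fin k => (Pi.single i (1 : K) : Fin k → K) j)
          = (1 : Matrix (Fin k) (Fin k) K) := by
        ext i j
        simp [Matrix.one_apply, Pi.single_apply, eq_comm]
      calc Matrix.detRowAlternating (fun i : Fin k => (Pi.single i (1 : K) : Fin k → K))
          = Matrix.det (Matrix.of fun i j : Fin k => (Pi.single i (1 : K) : Fin k → K) j) := rfl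
        _ = 1 := by rw [h1m, Matrix.det_one]
    simp only [AlternatingMap.compLinearMap_apply, LinearMap.compAlternatingMap_apply,
      LinearMap.inr_apply, LinearMap.prod_apply, Function.prod, LinearMap.toSpanSingleton_apply,
      LinearMap.zero_apply, AlternatingMap.curryLeft_apply_apply, Matrix.vecCons]
    rw [hdet, one_smul]
    exact h1 y z
  have hkey := congrArg (fun Φ => Φ a) key
  simpa only [AlternatingMap.compLinearMap_apply, LinearMap.compAlternatingMap_apply,
    LinearMap.inr_apply, LinearMap.prod_apply, Function.prod, LinearMap.toSpanSingleton_apply,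
    LinearMap.zero_apply, AlternatingMap.curryLeft_apply_apply, Matrix.vecCons] using hkey

end LTVAux

namespace LTVAux
set_option linter.unusedSectionVars false
open Fin Function

variable {K L : Type*} [Field K] [LieRing L] [Module K L] [LieAlgebra K L] {k : ℕ}
variable {B : AlternatingMap K (L × (Fin k → K)) (L × (Fin k → K)) (Fin (k + 1 + 1))}

variable (B) in
def H2 : Prop := ∀ v : Fin (k + 2) → L × (Fin k → K),
      (∀ i, (v i).1 = 0 ∨ (v i).2 = 0) →
      ¬ ((Finset.univ.filter fun i => (v i).1 ≠ 0 ∧ (v i).2 = 0).card = 2 ∧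
          Submodule.span K ((fun i => (v i).2) '' {i | (v i).1 = 0}) = ⊤) →
      B v = 0

lemma v1 (h2 : H2 B) {v : Fin (k + 2) → L × (Fin k → K)}
    (hS : ∀ i, (v i).1 = 0 ∨ (v i).2 = 0)
    (hc : (Finset.univ.filter fun i => (v i).1 ≠ 0).card ≠ 2) : B v = 0 := by
  refine h2 v hS ?_
  rintro ⟨hcard, -⟩
  refine hc ?_
  have heq : (Finset.univ.filter fun i => (v i).1 ≠ 0)
      = Finset.univ.filter fun i => (v i).1 ≠ 0 ∧ (v i).2 = 0 := by
    refine Finset.filter_congr fun i _ => ?_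
    constructor
    · intro hi
      exact ⟨hi, (hS i).resolve_left hi⟩
    · intro hi
      exact hi.1
  rw [heq, hcard]

lemma v1a (h2 : H2 B) {v : Fin (k + 2) → L × (Fin k → K)}
    (hS : ∀ i, (v i).1 = 0 ∨ (v i).2 = 0) (α : Fin (k + 2))
    (hα : ∀ i, i ≠ α → (v i).1 = 0) : B v = 0 := by
  refine v1 h2 hS ?_
  have hsub : (Finset.univ.filter fun i => (v i).1 ≠ 0) ⊆ {α} := by
    intro i hi
    rw [Finset.mem_filter] at hi
    rw [Finset.mem_singleton]
    by_contra hne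
    exact hi.2 (hα i hne)
  have := Finset.card_le_card hsub
  simp only [Finset.card_singleton] at this
  omega

lemma v1b (h2 : H2 B) {v : Fin (k + 2) → L × (Fin k → K)}
    (hS : ∀ i, (v i).1 = 0 ∨ (v i).2 = 0) {i j l : Fin (k + 2)}
    (hij : i ≠ j) (hil : i ≠ l) (hjl : j ≠ l)
    (hi : (v i).1 ≠ 0) (hj : (v j).1 ≠ 0) (hl : (v l).1 ≠ 0) : B v = 0 := by
  refine v1 h2 hS ?_
  have : 2 < (Finset.univ.filter fun i => (v i).1 ≠ 0).card := by
    refine Finset.two_lt_card.mpr ⟨i, ?_, j, ?_, l, ?_, hij, hil, hjl⟩ <;>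
      simp [Finset.mem_filter, hi, hj, hl]
  omega

lemma exists_perm01 {m : ℕ} {i j : Fin (m + 2)} (hij : i ≠ j) :
    ∃ τ : Equiv.Perm (Fin (m + 2)), τ 0 = i ∧ τ 1 = j := by
  refine ⟨Equiv.swap 0 i * Equiv.swap 1 (Equiv.swap 0 i j), ?_, ?_⟩
  · have h0 : Equiv.swap 0 i j ≠ 0 := by
      intro h
      apply hij
      have := congrArg (Equiv.swap 0 i) h
      rw [Equiv.swap_apply_self, Equiv.swap_apply_left] at this
      exact this.symm
    have : Equiv.swap 1 (Equiv.swap 0 i j) 0 = 0 :=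
      Equiv.swap_apply_of_ne_of_ne (by simp) (Ne.symm h0)
    simp [Equiv.Perm.mul_apply, this]
  · simp [Equiv.Perm.mul_apply, Equiv.swap_apply_self]

end LTVAux

namespace LTVAux
set_option linter.unusedSectionVars false
open Fin Function

variable {K L : Type*} [Field K] [LieRing L] [Module K L] [LieAlgebra K L] {k : ℕ}
variable {B : AlternatingMap K (L × (Fin k → K)) (L × (Fin k → K)) (Fin (k + 1 + 1))}

lemma unit_smul_eq_zero {M : Type*} [AddCommGroup M] {u : ℤˣ} {x : M} (h : u • x = 0) :
    x = 0 := by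
  have := congrArg (fun y => u⁻¹ • y) h
  simpa [smul_smul] using this

lemma lemR (h1 : H1 B) (h2 : H2 B) {v : Fin (k + 2) → L × (Fin k → K)}
    (hS : ∀ i, (v i).1 = 0 ∨ (v i).2 = 0) : (B v).2 = 0 := by
  by_cases hc : (Finset.univ.filter fun i => (v i).1 ≠ 0).card = 2
  · obtain ⟨i, j, hij, hset⟩ := Finset.card_eq_two.mp hc
    obtain ⟨τ, hτ0, hτ1⟩ := exists_perm01 hij
    have hmem : ∀ p : Fin (k + 2), (v p).1 ≠ 0 ↔ (p = i ∨ p = j) := by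
      intro p
      constructor
      · intro hp
        have : p ∈ Finset.univ.filter fun i => (v i).1 ≠ 0 := by
          simp [Finset.mem_filter, hp]
        rw [hset] at this
        simpa using this
      · intro hp
        have : p ∈ ({i, j} : Finset (Fin (k + 2))) := by simpa using hp
        rw [← hset] at this
        simp only [Finset.mem_filter] at this
        exact this.2
    have hform : v ∘ τ = Fin.cons ((v i).1, (0 : Fin k → K))
        (Fin.cons ((v j).1, (0 : Fin k → K))
          (fun l : Fin k => ((0 : L), (v (τ l.succ.succ)).2))) := by
      funext p
      refine Fin.cases ?_ (fun p => ?_) p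
      · have h2i : (v i).2 = 0 := (hS i).resolve_left ((hmem i).mpr (Or.inl rfl))
        simp only [Function.comp_apply, hτ0, Fin.cons_zero]
        exact Prod.ext rfl h2i
      · refine Fin.cases ?_ (fun q => ?_) p
        · have h2j : (v j).2 = 0 := (hS j).resolve_left ((hmem j).mpr (Or.inr rfl))
          simp only [Function.comp_apply, Fin.succ_zero_eq_one, hτ1, Fin.cons_succ,
            Fin.cons_zero]
          exact Prod.ext rfl h2j
        · have hne : (v (τ q.succ.succ)).1 = 0 := by
            by_contra hne
            rcases (hmem _).mp hne with h | h
            · rw [← hτ0] at h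
              exact (Fin.succ_ne_zero _) (τ.injective h)
            · rw [← hτ1] at h
              have := τ.injective h
              rw [← Fin.succ_zero_eq_one] at this
              exact (Fin.succ_ne_zero _) (Fin.succ_injective _ this)
          simp only [Function.comp_apply, Fin.cons_succ]
          exact Prod.ext hne rfl
    have hperm := B.map_perm v τ
    rw [hform, lemA h1] at hperm
    have := congrArg Prod.snd hperm
    simp only [Prod.smul_snd] at this
    exact unit_smul_eq_zero (M := Fin k → K) this.symm
  · rw [v1 h2 hS hc]
    rfl

end LTVAux

namespace LTVAux
set_option linter.unusedSectionVars false
open Fin Function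

variable {K L : Type*} [Field K] [LieRing L] [Module K L] [LieAlgebra K L] {k : ℕ}
variable {B : AlternatingMap K (L × (Fin k → K)) (L × (Fin k → K)) (Fin (k + 1 + 1))}

/-- the rotation by two permutation -/
def ρ (k : ℕ) : Equiv.Perm (Fin (k + 2)) := finRotate (k + 2) * finRotate (k + 2)

lemma snoc_snoc_comp {α : Type*} (t : Fin k → α) (w₁ w₂ : α) :
    Fin.snoc (Fin.snoc t w₁) w₂ = (Fin.cons w₁ (Fin.cons w₂ t)) ∘ (ρ k) := by
  funext p
  have hρ : ∀ q : Fin (k + 2), (ρ k) q = q + 1 + 1 := by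
    intro q
    simp [ρ, finRotate_succ_apply]
  refine Fin.lastCases ?_ (fun q => ?_) p
  · have h1 : (Fin.last (k + 1)) + 1 + 1 = (1 : Fin (k + 2)) := by
      rw [Fin.last_add_one, zero_add]
    rw [Fin.snoc_last, Function.comp_apply, hρ, h1, ← Fin.succ_zero_eq_one, Fin.cons_succ,
      Fin.cons_zero]
  · refine Fin.lastCases ?_ (fun r => ?_) q
    · have h1 : (Fin.last k).castSucc + 1 + 1 = (0 : Fin (k + 2)) := by
        rw [Fin.coeSucc_eq_succ, Fin.succ_last, Fin.last_add_one]
      rw [Fin.snoc_castSucc, Fin.snoc_last, Function.comp_apply, hρ, h1, Fin.cons_zero]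
    · have h1 : r.castSucc.castSucc + 1 + 1 = r.succ.succ := by
        rw [Fin.coeSucc_eq_succ, Fin.succ_castSucc, Fin.coeSucc_eq_succ]
      rw [Fin.snoc_castSucc, Fin.snoc_castSucc, Function.comp_apply, hρ, h1, Fin.cons_succ,
        Fin.cons_succ]

lemma lemRho (t : Fin k → L × (Fin k → K)) (w₁ w₂ : L × (Fin k → K)) :
    B (Fin.snoc (Fin.snoc t w₁) w₂)
      = Equiv.Perm.sign (ρ k) • B (Fin.cons w₁ (Fin.cons w₂ t)) := by
  rw [snoc_snoc_comp, B.map_perm]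

lemma snoc_comp_swap {α : Type*} (f : Fin (k + 1) → α) (w : α) (a b : Fin (k + 1)) :
    Fin.snoc (f ∘ Equiv.swap a b) w
      = (Fin.snoc f w : Fin (k + 2) → α) ∘ Equiv.swap a.castSucc b.castSucc := by
  funext p
  refine Fin.lastCases ?_ (fun q => ?_) p
  · have : Equiv.swap a.castSucc b.castSucc (Fin.last (k + 1)) = Fin.last (k + 1) :=
      Equiv.swap_apply_of_ne_of_ne (Fin.castSucc_lt_last a).ne' (Fin.castSucc_lt_last b).ne'
    rw [Fin.snoc_last, Function.comp_apply, this, Fin.snoc_last]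
  · have hsw : Equiv.swap a.castSucc b.castSucc q.castSucc = (Equiv.swap a b q).castSucc := by
      rcases eq_or_ne q a with rfl | hqa
      · rw [Equiv.swap_apply_left, Equiv.swap_apply_left]
      rcases eq_or_ne q b with rfl | hqb
      · rw [Equiv.swap_apply_right, Equiv.swap_apply_right]
      · rw [Equiv.swap_apply_of_ne_of_ne (by simpa using hqa) (by simpa using hqb),
          Equiv.swap_apply_of_ne_of_ne hqa hqb]
    simp only [Function.comp_apply, Fin.snoc_castSucc, hsw]

end LTVAux

namespace LTVAux
set_option linter.unusedSectionVars false
open Fin Function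

variable {K L : Type*} [Field K] [LieRing L] [Module K L] [LieAlgebra K L] {k : ℕ}
variable (B : AlternatingMap K (L × (Fin k → K)) (L × (Fin k → K)) (Fin (k + 1 + 1)))

/-- the linear map `w ↦ B (snoc f w)` -/
def lf (f : Fin (k + 1) → L × (Fin k → K)) : (L × (Fin k → K)) →ₗ[K] (L × (Fin k → K)) :=
  B.toMultilinearMap.curryRight f

@[simp] lemma lf_apply (f : Fin (k + 1) → L × (Fin k → K)) (w : L × (Fin k → K)) :
    lf B f w = B (Fin.snoc f w) := rfl

/-- the linear map `w ↦ B (update g i w)` -/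
def upd (g : Fin (k + 2) → L × (Fin k → K)) (i : Fin (k + 2)) :
    (L × (Fin k → K)) →ₗ[K] (L × (Fin k → K)) where
  toFun w := B (Function.update g i w)
  map_add' x y := B.toMultilinearMap.map_update_add g i x y
  map_smul' c x := B.toMultilinearMap.map_update_smul g i c x

@[simp] lemma upd_apply (g : Fin (k + 2) → L × (Fin k → K)) (i : Fin (k + 2))
    (w : L × (Fin k → K)) : upd B g i w = B (Function.update g i w) := rfl

/-- the difference of the two sides of the Filippov identity -/
def D (f : Fin (k + 1) → L × (Fin k → K)) (g : Fin (k + 2) → L × (Fin k → K)) :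
    L × (Fin k → K) :=
  B (Fin.snoc f (B g)) - ∑ i, B (Function.update g i (B (Fin.snoc f (g i))))

variable {B}

lemma D_comp_swap_left (f : Fin (k + 1) → L × (Fin k → K))
    (g : Fin (k + 2) → L × (Fin k → K)) (a b : Fin (k + 1)) :
    D B (f ∘ Equiv.swap a b) g = Equiv.Perm.sign (Equiv.swap a b) • D B f g := by
  rcases eq_or_ne a b with rfl | hab
  · rw [Equiv.swap_self]
    simp only [Equiv.Perm.sign_refl, one_smul]
    congr 1
  · have hBsnoc : ∀ w, B (Fin.snoc (f ∘ Equiv.swap a b) w) = - B (Fin.snoc f w) := by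
      intro w
      rw [snoc_comp_swap]
      exact B.map_swap _ (by simpa using hab)
    rw [Equiv.Perm.sign_swap hab]
    unfold D
    rw [hBsnoc]
    have hterm : ∀ i, B (Function.update g i (B (Fin.snoc (f ∘ Equiv.swap a b) (g i))))
        = - B (Function.update g i (B (Fin.snoc f (g i)))) := by
      intro i
      rw [hBsnoc]
      exact map_neg ((upd B g i).toAddMonoidHom) _
    rw [Finset.sum_congr rfl (fun i _ => hterm i), Units.neg_smul, one_smul,
      Finset.sum_neg_distrib]
    abel

lemma D_comp_perm_right (f : Fin (k + 1) → L × (Fin k → K))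
    (g : Fin (k + 2) → L × (Fin k → K)) (τ : Equiv.Perm (Fin (k + 2))) :
    D B f (g ∘ τ) = Equiv.Perm.sign τ • D B f g := by
  have h1 : B (Fin.snoc f (B (g ∘ τ))) = Equiv.Perm.sign τ • B (Fin.snoc f (B g)) := by
    rw [B.map_perm, Units.smul_def, Units.smul_def]
    exact map_zsmul ((lf B f).toAddMonoidHom) _ _
  have h2 : ∀ i, B (Function.update (g ∘ τ) i (B (Fin.snoc f ((g ∘ τ) i))))
      = Equiv.Perm.sign τ • B (Function.update g (τ i) (B (Fin.snoc f (g (τ i))))) := by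
    intro i
    have hupd : Function.update (g ∘ τ) i (B (Fin.snoc f (g (τ i))))
        = Function.update g (τ i) (B (Fin.snoc f (g (τ i)))) ∘ τ := by
      rw [Function.update_comp_equiv g τ (τ i), Equiv.symm_apply_apply]
    rw [Function.comp_apply, hupd]
    exact B.map_perm _ τ
  have hsum : ∑ i, B (Function.update g (τ i) (B (Fin.snoc f (g (τ i)))))
      = ∑ j, B (Function.update g j (B (Fin.snoc f (g j)))) :=
    Fintype.sum_equiv τ _ _ (fun i => rfl)
  unfold D
  rw [h1, Finset.sum_congr rfl (fun i _ => h2 i), ← Finset.smul_sum, hsum, smul_sub]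

end LTVAux

namespace LTVAux
set_option linter.unusedSectionVars false
open Fin Function

variable {K L : Type*} [Field K] [LieRing L] [Module K L] [LieAlgebra K L] {k : ℕ}

lemma sigma_gen {m : ℕ} (hm : k < m)
    (C : AlternatingMap K (L × (Fin k → K)) (L × (Fin k → K)) (Fin m))
    (φ : (Fin k → K) →ₗ[K] (L × (Fin k → K))) (b : Fin m → Fin k → K) :
    ∑ j, C (Function.update (fun l : Fin m => ((0 : L), b l)) j (φ (b j))) = 0 := by
  classical
  set ι2 : (Fin k → K) →ₗ[K] (L × (Fin k → K)) := LinearMap.inr K L (Fin k → K) with hι2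
  have happ : ∀ (c : Fin m → Fin k → K) (p : Fin m),
      (C.toMultilinearMap.compLinearMap (fun l => if l = p then φ else ι2)) c
        = C (Function.update (fun l : Fin m => ((0 : L), c l)) p (φ (c p))) := by
    intro c p
    rw [MultilinearMap.compLinearMap_apply]
    refine congrArg (fun t => C t) (funext fun l => ?_)
    rcases eq_or_ne l p with rfl | hlp
    · simp
    · rw [if_neg hlp, Function.update_of_ne hlp]
      rfl
  set M : MultilinearMap K (fun _ : Fin m => (Fin k → K)) (L × (Fin k → K)) :=
    ∑ p, C.toMultilinearMap.compLinearMap (fun l => if l = p then φ else ι2) with hM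
  have hMapp : ∀ c : Fin m → Fin k → K,
      M c = ∑ p, C (Function.update (fun l : Fin m => ((0 : L), c l)) p (φ (c p))) := by
    intro c
    rw [hM, MultilinearMap.sum_apply]
    exact Finset.sum_congr rfl fun p _ => happ c p
  have halt : ∀ (c : Fin m → Fin k → K) (i j : Fin m), c i = c j → i ≠ j → M c = 0 := by
    intro c i j hc hij
    rw [hMapp]
    have hterm0 : ∀ p, p ≠ i → p ≠ j →
        C (Function.update (fun l : Fin m => ((0 : L), c l)) p (φ (c p))) = 0 := by
      intro p hpi hpj
      refine C.map_eq_zero_of_eq _ ?_ hij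
      rw [Function.update_of_ne (Ne.symm hpi), Function.update_of_ne (Ne.symm hpj), hc]
    have hpair : C (Function.update (fun l : Fin m => ((0 : L), c l)) i (φ (c i)))
        = - C (Function.update (fun l : Fin m => ((0 : L), c l)) j (φ (c j))) := by
      have hcomp : Function.update (fun l : Fin m => ((0 : L), c l)) i (φ (c i))
          = (Function.update (fun l : Fin m => ((0 : L), c l)) j (φ (c j))) ∘ Equiv.swap i j := by
        funext l
        rcases eq_or_ne l i with rfl | hli
        · rw [Function.comp_apply, Equiv.swap_apply_left, Function.update_self,
            Function.update_self, hc]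
        rcases eq_or_ne l j with rfl | hlj
        · rw [Function.comp_apply, Equiv.swap_apply_right, Function.update_of_ne hli,
            Function.update_of_ne (Ne.symm hli), hc]
        · rw [Function.comp_apply, Equiv.swap_apply_of_ne_of_ne hli hlj,
            Function.update_of_ne hli, Function.update_of_ne hlj]
      rw [hcomp]
      exact C.map_swap _ hij
    have hsub : ∑ p, C (Function.update (fun l : Fin m => ((0 : L), c l)) p (φ (c p)))
        = ∑ p ∈ ({i, j} : Finset (Fin m)), C (Function.update (fun l : Fin m => ((0 : L), c l)) p (φ (c p))) := by
      refine (Finset.sum_subset (Finset.subset_univ _) ?_).symm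
      intro p _ hp
      simp only [Finset.mem_insert, Finset.mem_singleton, not_or] at hp
      exact hterm0 p hp.1 hp.2
    rw [hsub, Finset.sum_pair hij, hpair, neg_add_cancel]
  set A : AlternatingMap K (Fin k → K) (L × (Fin k → K)) (Fin m) :=
    { M with map_eq_zero_of_eq' := fun c i j hc hij => halt c i j hc hij } with hA
  have hA0 : A = 0 := by
    refine Module.Basis.ext_alternating (Pi.basisFun K (Fin k)) (fun v hv => ?_)
    exfalso
    have := Fintype.card_le_of_injective v hv
    simp only [Fintype.card_fin] at this
    omega
  have : A b = 0 := by rw [hA0]; rfl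
  rw [← hMapp b, show M b = A b from rfl, this]

end LTVAux

namespace LTVAux
set_option linter.unusedSectionVars false
open Fin Function

variable {K L : Type*} [Field K] [LieRing L] [Module K L] [LieAlgebra K L] {k : ℕ}
variable {B : AlternatingMap K (L × (Fin k → K)) (L × (Fin k → K)) (Fin (k + 1 + 1))}

section Cases

lemma hS_snoc (f : Fin (k + 1) → L × (Fin k → K))
    (hSf : ∀ i, (f i).1 = 0 ∨ (f i).2 = 0) {w : L × (Fin k → K)} (hw : w.1 = 0 ∨ w.2 = 0) :
    ∀ i, ((Fin.snoc f w : Fin (k + 2) → L × (Fin k → K)) i).1 = 0 ∨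
      ((Fin.snoc f w : Fin (k + 2) → L × (Fin k → K)) i).2 = 0 := by
  intro i
  refine Fin.lastCases ?_ (fun q => ?_) i
  · rwa [Fin.snoc_last]
  · rw [Fin.snoc_castSucc]
    exact hSf q

lemma hS_update (g : Fin (k + 2) → L × (Fin k → K))
    (hSg : ∀ i, (g i).1 = 0 ∨ (g i).2 = 0) {w : L × (Fin k → K)}
    (hw : w.1 = 0 ∨ w.2 = 0) (i : Fin (k + 2)) :
    ∀ p, ((Function.update g i w) p).1 = 0 ∨ ((Function.update g i w) p).2 = 0 := by
  intro p
  rcases eq_or_ne p i with rfl | hpi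
  · rwa [Function.update_self]
  · rw [Function.update_of_ne hpi]
    exact hSg p

/-- case: no Lie entries in `f` -/
lemma case_p0 (h1 : H1 B) (h2 : H2 B) (f : Fin (k + 1) → L × (Fin k → K))
    (g : Fin (k + 2) → L × (Fin k → K))
    (hSf : ∀ i, (f i).1 = 0 ∨ (f i).2 = 0) (hSg : ∀ i, (g i).1 = 0 ∨ (g i).2 = 0)
    (hp : ∀ i, (f i).1 = 0) : D B f g = 0 := by
  have hsnoc : ∀ w : L × (Fin k → K), (w.1 = 0 ∨ w.2 = 0) → B (Fin.snoc f w) = 0 := by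
    intro w hw
    refine v1a h2 (hS_snoc f hSf hw) (Fin.last (k + 1)) (fun i => ?_)
    refine Fin.lastCases ?_ (fun q => ?_) i
    · intro h
      exact absurd rfl h
    · intro _
      rw [Fin.snoc_castSucc]
      exact hp q
  have hBg2 : (B g).1 = 0 ∨ (B g).2 = 0 := Or.inr (lemR h1 h2 hSg)
  unfold D
  rw [hsnoc _ hBg2]
  have hz : ∀ i, B (Function.update g i (B (Fin.snoc f (g i)))) = 0 := by
    intro i
    rw [hsnoc _ (hSg i)]
    exact map_zero ((upd B g i).toAddMonoidHom)
  rw [Finset.sum_congr rfl (fun i _ => hz i), Finset.sum_const, smul_zero, sub_zero]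

/-- case: at least three Lie entries in `f` -/
lemma case_p3 (h1 : H1 B) (h2 : H2 B) (f : Fin (k + 1) → L × (Fin k → K))
    (g : Fin (k + 2) → L × (Fin k → K))
    (hSf : ∀ i, (f i).1 = 0 ∨ (f i).2 = 0) (hSg : ∀ i, (g i).1 = 0 ∨ (g i).2 = 0)
    {a b c : Fin (k + 1)} (hab : a ≠ b) (hac : a ≠ c) (hbc : b ≠ c)
    (ha : (f a).1 ≠ 0) (hb : (f b).1 ≠ 0) (hc : (f c).1 ≠ 0) : D B f g = 0 := by
  have hsnoc : ∀ w : L × (Fin k → K), (w.1 = 0 ∨ w.2 = 0) → B (Fin.snoc f w) = 0 := by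
    intro w hw
    refine v1b h2 (hS_snoc f hSf hw) (i := a.castSucc) (j := b.castSucc) (l := c.castSucc)
      (by simpa using hab) (by simpa using hac) (by simpa using hbc) ?_ ?_ ?_ <;>
      rwa [Fin.snoc_castSucc]
  have hBg2 : (B g).1 = 0 ∨ (B g).2 = 0 := Or.inr (lemR h1 h2 hSg)
  unfold D
  rw [hsnoc _ hBg2]
  have hz : ∀ i, B (Function.update g i (B (Fin.snoc f (g i)))) = 0 := by
    intro i
    rw [hsnoc _ (hSg i)]
    exact map_zero ((upd B g i).toAddMonoidHom)
  rw [Finset.sum_congr rfl (fun i _ => hz i), Finset.sum_const, smul_zero, sub_zero]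

/-- case: at least three Lie entries in `g` -/
lemma case_q3 (h1 : H1 B) (h2 : H2 B) (f : Fin (k + 1) → L × (Fin k → K))
    (g : Fin (k + 2) → L × (Fin k → K))
    (hSf : ∀ i, (f i).1 = 0 ∨ (f i).2 = 0) (hSg : ∀ i, (g i).1 = 0 ∨ (g i).2 = 0)
    {β γ δ : Fin (k + 2)} (hβγ : β ≠ γ) (hβδ : β ≠ δ) (hγδ : γ ≠ δ)
    (hβ : (g β).1 ≠ 0) (hγ : (g γ).1 ≠ 0) (hδ : (g δ).1 ≠ 0) : D B f g = 0 := by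
  have hBg : B g = 0 := v1b h2 hSg hβγ hβδ hγδ hβ hγ hδ
  unfold D
  rw [hBg]
  rw [B.map_coord_zero (m := Fin.snoc f 0) (Fin.last (k + 1)) (by rw [Fin.snoc_last])]
  have hterm : ∀ i, B (Function.update g i (B (Fin.snoc f (g i)))) = 0 := by
    intro i
    set w := B (Fin.snoc f (g i)) with hw
    rcases eq_or_ne w 0 with hw0 | hw0
    · rw [hw0]
      exact map_zero ((upd B g i).toAddMonoidHom)
    · have hw2 : w.2 = 0 := lemR h1 h2 (hS_snoc f hSf (hSg i))
      have hw1 : w.1 ≠ 0 := by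
        intro h
        exact hw0 (Prod.ext h hw2)
      have hval : ∀ p, p = β ∨ p = γ ∨ p = δ → ((Function.update g i w) p).1 ≠ 0 := by
        intro p hp
        rcases eq_or_ne p i with rfl | hpi
        · rwa [Function.update_self]
        · rw [Function.update_of_ne hpi]
          rcases hp with rfl | rfl | rfl
          · exact hβ
          · exact hγ
          · exact hδ
      exact v1b h2 (hS_update g hSg (Or.inr hw2) i) hβγ hβδ hγδ
        (hval β (Or.inl rfl)) (hval γ (Or.inr (Or.inl rfl))) (hval δ (Or.inr (Or.inr rfl)))
  rw [Finset.sum_congr rfl (fun i _ => hterm i), Finset.sum_const, smul_zero, sub_zero]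

/-- case: at least two Lie entries in `f`, exactly two in `g` -/
lemma case_p2q2 (h1 : H1 B) (h2 : H2 B) (f : Fin (k + 1) → L × (Fin k → K))
    (g : Fin (k + 2) → L × (Fin k → K))
    (hSf : ∀ i, (f i).1 = 0 ∨ (f i).2 = 0) (hSg : ∀ i, (g i).1 = 0 ∨ (g i).2 = 0)
    {a b : Fin (k + 1)} (hab : a ≠ b) (ha : (f a).1 ≠ 0) (hb : (f b).1 ≠ 0)
    {β γ : Fin (k + 2)} (hβγ : β ≠ γ) (hβ : (g β).1 ≠ 0) (hγ : (g γ).1 ≠ 0) :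
    D B f g = 0 := by
  have hsnoc : ∀ w : L × (Fin k → K), (w.1 = 0 ∨ w.2 = 0) → w.1 ≠ 0 →
      B (Fin.snoc f w) = 0 := by
    intro w hw hw1
    refine v1b h2 (hS_snoc f hSf hw) (i := a.castSucc) (j := b.castSucc)
      (l := Fin.last (k + 1)) (by simpa using hab) (Fin.castSucc_lt_last a).ne
      (Fin.castSucc_lt_last b).ne ?_ ?_ ?_
    · rwa [Fin.snoc_castSucc]
    · rwa [Fin.snoc_castSucc]
    · rwa [Fin.snoc_last]
  unfold D
  have hfirst : B (Fin.snoc f (B g)) = 0 := by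
    rcases eq_or_ne (B g) 0 with h | h
    · rw [h]
      exact B.map_coord_zero (m := Fin.snoc f 0) (Fin.last (k + 1)) (by rw [Fin.snoc_last])
    · refine hsnoc _ (Or.inr (lemR h1 h2 hSg)) ?_
      intro h1'
      exact h (Prod.ext h1' (lemR h1 h2 hSg))
  rw [hfirst]
  have hterm : ∀ i, B (Function.update g i (B (Fin.snoc f (g i)))) = 0 := by
    intro i
    rcases eq_or_ne ((g i).1) 0 with hgi | hgi
    · set w := B (Fin.snoc f (g i)) with hw
      rcases eq_or_ne w 0 with hw0 | hw0
      · rw [hw0]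
        exact map_zero ((upd B g i).toAddMonoidHom)
      · have hw2 : w.2 = 0 := lemR h1 h2 (hS_snoc f hSf (hSg i))
        have hw1 : w.1 ≠ 0 := fun h => hw0 (Prod.ext h hw2)
        have hiβ : i ≠ β := fun h => hβ (h ▸ hgi)
        have hiγ : i ≠ γ := fun h => hγ (h ▸ hgi)
        refine v1b h2 (hS_update g hSg (Or.inr hw2) i) hβγ (Ne.symm hiβ) (Ne.symm hiγ)
          ?_ ?_ ?_
        · rw [Function.update_of_ne (Ne.symm hiβ)]
          exact hβ
        · rw [Function.update_of_ne (Ne.symm hiγ)]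
          exact hγ
        · rw [Function.update_self]
          exact hw1
    · rw [hsnoc (g i) (hSg i) hgi]
      exact map_zero ((upd B g i).toAddMonoidHom)
  rw [Finset.sum_congr rfl (fun i _ => hterm i), Finset.sum_const, smul_zero, sub_zero]

end Cases
end LTVAux

namespace LTVAux
set_option linter.unusedSectionVars false
open Fin Function

variable {K L : Type*} [Field K] [LieRing L] [Module K L] [LieAlgebra K L] {k : ℕ}
variable {B : AlternatingMap K (L × (Fin k → K)) (L × (Fin k → K)) (Fin (k + 1 + 1))}

/-- case: no Lie entries in `g` -/
lemma case_q0 (h1 : H1 B) (h2 : H2 B) (f : Fin (k + 1) → L × (Fin k → K))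
    (g : Fin (k + 2) → L × (Fin k → K))
    (hSf : ∀ i, (f i).1 = 0 ∨ (f i).2 = 0) (hSg : ∀ i, (g i).1 = 0 ∨ (g i).2 = 0)
    (hq : ∀ i, (g i).1 = 0) : D B f g = 0 := by
  have hBg : B g = 0 := v1a h2 hSg 0 (fun i _ => hq i)
  unfold D
  rw [hBg, B.map_coord_zero (m := Fin.snoc f 0) (Fin.last (k + 1)) (by rw [Fin.snoc_last])]
  set φ : (Fin k → K) →ₗ[K] L × (Fin k → K) :=
    (lf B f).comp (LinearMap.inr K L (Fin k → K)) with hφ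
  have hgeq : g = fun m => ((0 : L), (g m).2) := funext fun m => Prod.ext (hq m) rfl
  have hterm : ∀ i, B (Function.update g i (B (Fin.snoc f (g i))))
      = B (Function.update (fun m : Fin (k + 2) => ((0 : L), (g m).2)) i (φ ((g i).2))) := by
    intro i
    conv_lhs => rw [hgeq]
    rfl
  have hsum : ∑ i, B (Function.update g i (B (Fin.snoc f (g i)))) = 0 := by
    rw [Finset.sum_congr rfl (fun i _ => hterm i)]
    exact sigma_gen (by omega) B φ (fun m => (g m).2)
  rw [hsum, sub_zero]

/-- case: exactly one Lie entry in `g`, at position `0` -/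
lemma case_q1_sorted (h1 : H1 B) (h2 : H2 B) (f : Fin (k + 1) → L × (Fin k → K))
    (g : Fin (k + 2) → L × (Fin k → K))
    (hSf : ∀ i, (f i).1 = 0 ∨ (f i).2 = 0) (hSg : ∀ i, (g i).1 = 0 ∨ (g i).2 = 0)
    (hq : ∀ j : Fin (k + 1), (g j.succ).1 = 0) : D B f g = 0 := by
  have hq' : ∀ i : Fin (k + 2), i ≠ 0 → (g i).1 = 0 := by
    intro i
    refine Fin.cases ?_ (fun j => ?_) i
    · intro h
      exact absurd rfl h
    · intro _
      exact hq j
  have hBg : B g = 0 := v1a h2 hSg 0 hq'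
  unfold D
  rw [hBg, B.map_coord_zero (m := Fin.snoc f 0) (Fin.last (k + 1)) (by rw [Fin.snoc_last])]
  set φ : (Fin k → K) →ₗ[K] L × (Fin k → K) :=
    (lf B f).comp (LinearMap.inr K L (Fin k → K)) with hφ
  have hgeq : g = Fin.cons (g 0) (fun j : Fin (k + 1) => ((0 : L), (g j.succ).2)) := by
    funext i
    refine Fin.cases ?_ (fun j => ?_) i
    · rw [Fin.cons_zero]
    · rw [Fin.cons_succ]
      exact Prod.ext (hq j) rfl
  have hzero0 : B (Function.update g 0 (B (Fin.snoc f (g 0)))) = 0 := by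
    set w := B (Fin.snoc f (g 0)) with hw
    rcases eq_or_ne w 0 with hw0 | hw0
    · rw [hw0]
      exact map_zero ((upd B g 0).toAddMonoidHom)
    · have hw2 : w.2 = 0 := lemR h1 h2 (hS_snoc f hSf (hSg 0))
      refine v1a h2 (hS_update g hSg (Or.inr hw2) 0) 0 (fun i hi => ?_)
      rw [Function.update_of_ne hi]
      exact hq' i hi
  have hterm : ∀ j : Fin (k + 1), B (Function.update g j.succ (B (Fin.snoc f (g j.succ))))
      = (B.curryLeft (g 0)) (Function.update
          (fun m : Fin (k + 1) => ((0 : L), (g m.succ).2)) j (φ ((g j.succ).2))) := by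
    intro j
    conv_lhs => rw [hgeq]
    rw [Fin.cons_succ, ← Fin.cons_update]
    rfl
  rw [Fin.sum_univ_succ, hzero0, zero_add,
    Finset.sum_congr rfl (fun j _ => hterm j),
    sigma_gen (by omega) (B.curryLeft (g 0)) φ (fun m => (g m.succ).2), sub_zero]

/-- case: exactly one Lie entry in `g` -/
lemma case_q1 (h1 : H1 B) (h2 : H2 B) (f : Fin (k + 1) → L × (Fin k → K))
    (g : Fin (k + 2) → L × (Fin k → K))
    (hSf : ∀ i, (f i).1 = 0 ∨ (f i).2 = 0) (hSg : ∀ i, (g i).1 = 0 ∨ (g i).2 = 0)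
    (β : Fin (k + 2)) (hq : ∀ i, i ≠ β → (g i).1 = 0) : D B f g = 0 := by
  have h := D_comp_perm_right (B := B) f g (Equiv.swap 0 β)
  have hzero : D B f (g ∘ Equiv.swap 0 β) = 0 := by
    refine case_q1_sorted h1 h2 f _ hSf (fun i => hSg _) (fun j => ?_)
    rcases eq_or_ne (j.succ) β with hjβ | hjβ
    · rw [Function.comp_apply, hjβ, Equiv.swap_apply_right]
      refine hq 0 ?_
      rw [← hjβ]
      exact (Fin.succ_ne_zero j).symm
    · rw [Function.comp_apply, Equiv.swap_apply_of_ne_of_ne (Fin.succ_ne_zero j) hjβ]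
      exact hq _ hjβ
  rw [hzero] at h
  exact unit_smul_eq_zero h.symm

end LTVAux

namespace LTVAux
set_option linter.unusedSectionVars false
open Fin Function

variable {K L : Type*} [Field K] [LieRing L] [Module K L] [LieAlgebra K L] {k : ℕ}
variable {B : AlternatingMap K (L × (Fin k → K)) (L × (Fin k → K)) (Fin (k + 1 + 1))}

lemma hpair (c : K) (u : L) : ((c • u, (0 : Fin k → K)) : L × (Fin k → K)) = c • (u, 0) := by
  rw [Prod.smul_mk, smul_zero]

lemma snoc_smul (f : Fin (k + 1) → L × (Fin k → K)) (c : K) (v : L × (Fin k → K)) :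
    B (Fin.snoc f (c • v)) = c • B (Fin.snoc f v) :=
  (lf B f).map_smul c v

lemma upd_units (g : Fin (k + 2) → L × (Fin k → K)) (i : Fin (k + 2)) (s : ℤˣ)
    (v : L × (Fin k → K)) :
    B (Function.update g i (s • v)) = s • B (Function.update g i v) := by
  rw [Units.smul_def, Units.smul_def]
  exact map_zsmul ((upd B g i).toAddMonoidHom) _ _

lemma upd_smul (g : Fin (k + 2) → L × (Fin k → K)) (i : Fin (k + 2)) (c : K)
    (v : L × (Fin k → K)) :
    B (Function.update g i (c • v)) = c • B (Function.update g i v) :=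
  (upd B g i).map_smul c v

/-- main case, sorted: one Lie entry in `f` (at the last position), two in `g`
(at the first two positions) -/
lemma case_main_sorted (h1 : H1 B) (h2 : H2 B) (x y z : L)
    (a : Fin k → Fin k → K) (b : Fin k → Fin k → K) :
    D B (Fin.snoc (fun i : Fin k => ((0 : L), a i)) (x, 0))
        (Fin.cons (y, 0) (Fin.cons (z, 0) (fun i : Fin k => ((0 : L), b i)))) = 0 := by
  set da := Matrix.detRowAlternating a with hda
  set db := Matrix.detRowAlternating b with hdb
  set s := Equiv.Perm.sign (ρ k) with hsig
  set f' : Fin (k + 1) → L × (Fin k → K) :=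
    Fin.snoc (fun i : Fin k => ((0 : L), a i)) (x, 0) with hf'
  set g' : Fin (k + 2) → L × (Fin k → K) :=
    Fin.cons (y, 0) (Fin.cons (z, 0) (fun i : Fin k => ((0 : L), b i))) with hg'
  have hSf' : ∀ i, (f' i).1 = 0 ∨ (f' i).2 = 0 := by
    intro i
    refine Fin.lastCases ?_ (fun q => ?_) i
    · rw [hf', Fin.snoc_last]
      exact Or.inr rfl
    · rw [hf', Fin.snoc_castSucc]
      exact Or.inl rfl
  have hsn : ∀ w : L, B (Fin.snoc f' ((w, 0) : L × (Fin k → K)))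
      = s • (da • (((⁅x, w⁆, 0) : L × (Fin k → K)))) := by
    intro w
    rw [hf', lemRho, lemA h1, hpair, ← hsig, ← hda]
  have hBg : B g' = db • ((⁅y, z⁆, 0) : L × (Fin k → K)) := by
    rw [hg', lemA h1, hpair, ← hdb]
  have hT1 : B (Fin.snoc f' (B g')) = db • (s • (da • ((⁅x, ⁅y, z⁆⁆, 0)
      : L × (Fin k → K)))) := by
    rw [hBg, snoc_smul, hsn]
  have hF0 : B (Function.update g' 0 (B (Fin.snoc f' (g' 0))))
      = s • (da • (db • ((⁅⁅x, y⁆, z⁆, 0) : L × (Fin k → K)))) := by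
    have hg0 : g' 0 = ((y, 0) : L × (Fin k → K)) := by rw [hg', Fin.cons_zero]
    rw [hg0, hsn y, upd_units, upd_smul, hg', Fin.update_cons_zero, lemA h1, hpair, ← hdb]
  have hF1 : B (Function.update g' (Fin.succ 0) (B (Fin.snoc f' (g' (Fin.succ 0)))))
      = s • (da • (db • ((⁅y, ⁅x, z⁆⁆, 0) : L × (Fin k → K)))) := by
    have hg1 : g' (Fin.succ 0) = ((z, 0) : L × (Fin k → K)) := by
      rw [hg', Fin.cons_succ, Fin.cons_zero]
    rw [hg1, hsn z, upd_units, upd_smul, hg', ← Fin.cons_update, Fin.update_cons_zero,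
      lemA h1, hpair, ← hdb]
  have hFj : ∀ j : Fin k,
      B (Function.update g' j.succ.succ (B (Fin.snoc f' (g' j.succ.succ)))) = 0 := by
    intro j
    have hgj : g' j.succ.succ = (((0 : L), b j) : L × (Fin k → K)) := by
      rw [hg', Fin.cons_succ, Fin.cons_succ]
    rw [hgj]
    have hin : B (Fin.snoc f' (((0 : L), b j) : L × (Fin k → K))) = 0 := by
      refine v1a h2 (hS_snoc f' hSf' (Or.inl rfl)) ((Fin.last k).castSucc) (fun p => ?_)
      refine Fin.lastCases ?_ (fun q => ?_) p
      · intro _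
        rw [Fin.snoc_last]
      · intro hq
        rw [Fin.snoc_castSucc]
        revert hq
        refine Fin.lastCases ?_ (fun r => ?_) q
        · intro h
          exact absurd rfl h
        · intro _
          rw [hf', Fin.snoc_castSucc]
    rw [hin]
    exact map_zero ((upd B g' j.succ.succ).toAddMonoidHom)
  unfold D
  rw [Fin.sum_univ_succ, Fin.sum_univ_succ, hT1, hF0, hF1,
    Finset.sum_congr rfl (fun j _ => hFj j), Finset.sum_const, smul_zero, add_zero]
  have hJ : ((⁅x, ⁅y, z⁆⁆, 0) : L × (Fin k → K))
      = ((⁅⁅x, y⁆, z⁆, 0) : L × (Fin k → K)) + (⁅y, ⁅x, z⁆⁆, 0) := by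
    rw [Prod.mk_add_mk, add_zero, leibniz_lie]
  rw [hJ]
  rcases Int.units_eq_one_or s with hs | hs <;> rw [hs] <;>
    simp only [one_smul, Units.neg_smul, smul_neg] <;> module

end LTVAux

namespace LTVAux
set_option linter.unusedSectionVars false
open Fin Function

variable {K L : Type*} [Field K] [LieRing L] [Module K L] [LieAlgebra K L] {k : ℕ}
variable {B : AlternatingMap K (L × (Fin k → K)) (L × (Fin k → K)) (Fin (k + 1 + 1))}

/-- main case: one Lie entry in `f`, two in `g` -/
lemma case_main (h1 : H1 B) (h2 : H2 B) (f : Fin (k + 1) → L × (Fin k → K))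
    (g : Fin (k + 2) → L × (Fin k → K))
    (hSf : ∀ i, (f i).1 = 0 ∨ (f i).2 = 0) (hSg : ∀ i, (g i).1 = 0 ∨ (g i).2 = 0)
    (α : Fin (k + 1)) (hα1 : (f α).1 ≠ 0) (hα : ∀ i, i ≠ α → (f i).1 = 0)
    {β γ : Fin (k + 2)} (hβγ : β ≠ γ) (hβ : (g β).1 ≠ 0) (hγ : (g γ).1 ≠ 0)
    (hgK : ∀ i, i ≠ β → i ≠ γ → (g i).1 = 0) : D B f g = 0 := by
  obtain ⟨τ, hτ0, hτ1⟩ := exists_perm01 hβγ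
  have hfσ : f ∘ Equiv.swap α (Fin.last k)
      = Fin.snoc (fun i : Fin k => ((0 : L), (f (Equiv.swap α (Fin.last k) i.castSucc)).2))
          ((f α).1, (0 : Fin k → K)) := by
    funext p
    refine Fin.lastCases ?_ (fun q => ?_) p
    · rw [Function.comp_apply, Fin.snoc_last, Equiv.swap_apply_right]
      exact Prod.ext rfl ((hSf α).resolve_left hα1)
    · rw [Function.comp_apply, Fin.snoc_castSucc]
      have hne : Equiv.swap α (Fin.last k) q.castSucc ≠ α := by
        intro h
        have := (Equiv.swap α (Fin.last k)).injective
          (h.trans (Equiv.swap_apply_right α (Fin.last k)).symm)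
        exact (Fin.castSucc_lt_last q).ne this
      exact Prod.ext (hα _ hne) rfl
  have hgτ : g ∘ τ = Fin.cons ((g β).1, (0 : Fin k → K))
      (Fin.cons ((g γ).1, (0 : Fin k → K))
        (fun i : Fin k => ((0 : L), (g (τ i.succ.succ)).2))) := by
    funext p
    refine Fin.cases ?_ (fun p => ?_) p
    · rw [Function.comp_apply, hτ0, Fin.cons_zero]
      exact Prod.ext rfl ((hSg β).resolve_left hβ)
    · refine Fin.cases ?_ (fun q => ?_) p
      · simp only [Function.comp_apply, Fin.cons_succ, Fin.cons_zero, Fin.succ_zero_eq_one, hτ1]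
        exact Prod.ext rfl ((hSg γ).resolve_left hγ)
      · rw [Function.comp_apply, Fin.cons_succ, Fin.cons_succ]
        have hne1 : τ q.succ.succ ≠ β := by
          intro h
          rw [← hτ0] at h
          exact (Fin.succ_ne_zero _) (τ.injective h)
        have hne2 : τ q.succ.succ ≠ γ := by
          intro h
          rw [← hτ1] at h
          have := τ.injective h
          rw [← Fin.succ_zero_eq_one] at this
          exact (Fin.succ_ne_zero _) (Fin.succ_injective _ this)
        exact Prod.ext (hgK _ hne1 hne2) rfl
  have h0 : D B (f ∘ Equiv.swap α (Fin.last k)) (g ∘ τ) = 0 := by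
    rw [hfσ, hgτ]
    exact case_main_sorted h1 h2 _ _ _ _ _
  have htrans : D B (f ∘ Equiv.swap α (Fin.last k)) (g ∘ τ)
      = Equiv.Perm.sign (Equiv.swap α (Fin.last k)) • (Equiv.Perm.sign τ • D B f g) := by
    rw [D_comp_swap_left, D_comp_perm_right]
  rw [h0] at htrans
  exact unit_smul_eq_zero (unit_smul_eq_zero htrans.symm)

/-- the Filippov identity difference vanishes on tuples from `L×0 ∪ 0×Kᵏ` -/
lemma core (h1 : H1 B) (h2 : H2 B) (f : Fin (k + 1) → L × (Fin k → K))
    (g : Fin (k + 2) → L × (Fin k → K))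
    (hSf : ∀ i, (f i).1 = 0 ∨ (f i).2 = 0) (hSg : ∀ i, (g i).1 = 0 ∨ (g i).2 = 0) :
    D B f g = 0 := by
  classical
  by_cases hq2 : (Finset.univ.filter fun i => (g i).1 ≠ 0).card = 2
  · obtain ⟨β, γ, hβγ, hset⟩ := Finset.card_eq_two.mp hq2
    have hβ : (g β).1 ≠ 0 := by
      have : β ∈ Finset.univ.filter fun i => (g i).1 ≠ 0 := by
        rw [hset]
        simp
      simpa using (Finset.mem_filter.mp this).2
    have hγ : (g γ).1 ≠ 0 := by
      have : γ ∈ Finset.univ.filter fun i => (g i).1 ≠ 0 := by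
        rw [hset]
        simp
      simpa using (Finset.mem_filter.mp this).2
    have hgK : ∀ i, i ≠ β → i ≠ γ → (g i).1 = 0 := by
      intro i hiβ hiγ
      by_contra h
      have : i ∈ Finset.univ.filter fun i => (g i).1 ≠ 0 := by
        simp [Finset.mem_filter, h]
      rw [hset] at this
      simp only [Finset.mem_insert, Finset.mem_singleton] at this
      rcases this with h' | h'
      · exact hiβ h'
      · exact hiγ h'
    by_cases hp0 : ∀ i, (f i).1 = 0
    · exact case_p0 h1 h2 f g hSf hSg hp0
    · by_cases hp1 : (Finset.univ.filter fun i => (f i).1 ≠ 0).card = 1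
      · obtain ⟨α, hα⟩ := Finset.card_eq_one.mp hp1
        have hα1 : (f α).1 ≠ 0 := by
          have : α ∈ Finset.univ.filter fun i => (f i).1 ≠ 0 := by
            rw [hα]
            simp
          simpa using (Finset.mem_filter.mp this).2
        have hαo : ∀ i, i ≠ α → (f i).1 = 0 := by
          intro i hi
          by_contra h
          have : i ∈ Finset.univ.filter fun i => (f i).1 ≠ 0 := by
            simp [Finset.mem_filter, h]
          rw [hα] at this
          exact hi (Finset.mem_singleton.mp this)
        exact case_main h1 h2 f g hSf hSg α hα1 hαo hβγ hβ hγ hgK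
      · have hcard : 1 < (Finset.univ.filter fun i => (f i).1 ≠ 0).card := by
          rcases Nat.lt_or_ge (Finset.univ.filter fun i => (f i).1 ≠ 0).card 1 with h | h
          · exfalso
            have hemp : (Finset.univ.filter fun i => (f i).1 ≠ 0) = ∅ :=
              Finset.card_eq_zero.mp (by omega)
            refine hp0 (fun i => ?_)
            by_contra hne
            have hmem : i ∈ Finset.univ.filter fun i => (f i).1 ≠ 0 := by
              simp [Finset.mem_filter, hne]
            rw [hemp] at hmem
            exact absurd hmem (Finset.notMem_empty i)
          · omega
        obtain ⟨a, ham, b, hbm, hab⟩ := Finset.one_lt_card.mp hcard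
        have ha : (f a).1 ≠ 0 := by simpa using (Finset.mem_filter.mp ham).2
        have hb : (f b).1 ≠ 0 := by simpa using (Finset.mem_filter.mp hbm).2
        exact case_p2q2 h1 h2 f g hSf hSg hab ha hb hβγ hβ hγ
  · by_cases hq01 : (Finset.univ.filter fun i => (g i).1 ≠ 0).card ≤ 1
    · rcases Nat.le_one_iff_eq_zero_or_eq_one.mp hq01 with h | h
      · refine case_q0 h1 h2 f g hSf hSg (fun i => ?_)
        by_contra hne
        have : i ∈ Finset.univ.filter fun i => (g i).1 ≠ 0 := by
          simp [Finset.mem_filter, hne]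
        rw [Finset.card_eq_zero.mp h] at this
        exact absurd this (Finset.notMem_empty i)
      · obtain ⟨β, hβ⟩ := Finset.card_eq_one.mp h
        refine case_q1 h1 h2 f g hSf hSg β (fun i hi => ?_)
        by_contra hne
        have : i ∈ Finset.univ.filter fun i => (g i).1 ≠ 0 := by
          simp [Finset.mem_filter, hne]
        rw [hβ] at this
        exact hi (Finset.mem_singleton.mp this)
    · have hcard : 2 < (Finset.univ.filter fun i => (g i).1 ≠ 0).card := by omega
      obtain ⟨β, hβm, γ, hγm, δ, hδm, hβγ, hβδ, hγδ⟩ := Finset.two_lt_card.mp hcard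
      exact case_q3 h1 h2 f g hSf hSg hβγ hβδ hγδ
        (by simpa using (Finset.mem_filter.mp hβm).2)
        (by simpa using (Finset.mem_filter.mp hγm).2)
        (by simpa using (Finset.mem_filter.mp hδm).2)

end LTVAux

namespace LTVAux
set_option linter.unusedSectionVars false
open Fin Function

variable {K L : Type*} [Field K] [LieRing L] [Module K L] [LieAlgebra K L] {k : ℕ}
variable {B : AlternatingMap K (L × (Fin k → K)) (L × (Fin k → K)) (Fin (k + 1 + 1))}

/-- evaluation of a linear map at a point, as a linear map -/
def evalAt (w : L × (Fin k → K)) :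
    ((L × (Fin k → K)) →ₗ[K] (L × (Fin k → K))) →ₗ[K] (L × (Fin k → K)) where
  toFun φ := φ w
  map_add' φ ψ := rfl
  map_smul' c φ := rfl

lemma stageA (h1 : H1 B) (h2 : H2 B) (f : Fin (k + 1) → L × (Fin k → K))
    (hSf : ∀ i, (f i).1 = 0 ∨ (f i).2 = 0) (g : Fin (k + 2) → L × (Fin k → K)) :
    D B f g = 0 := by
  classical
  set bV : Module.Basis ((Module.Basis.ofVectorSpaceIndex K L) ⊕ Fin k) K (L × (Fin k → K)) :=
    (Module.Basis.ofVectorSpace K L).prod (Pi.basisFun K (Fin k)) with hbV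
  have hSb : ∀ p, ((bV p).1 = 0 ∨ (bV p).2 = 0) := by
    intro p
    rcases p with i | j
    · exact Or.inr (Module.Basis.prod_apply_inl_snd _ _ _)
    · exact Or.inl (Module.Basis.prod_apply_inr_fst _ _ _)
  set M1 : MultilinearMap K (fun _ : Fin (k + 1 + 1) => L × (Fin k → K)) (L × (Fin k → K)) :=
    (lf B f).compMultilinearMap B.toMultilinearMap with hM1
  set M2 : MultilinearMap K (fun _ : Fin (k + 1 + 1) => L × (Fin k → K)) (L × (Fin k → K)) :=
    ∑ i : Fin (k + 1 + 1), B.toMultilinearMap.compLinearMap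
      (fun j => if j = i then (lf B f) else LinearMap.id) with hM2
  have happ2 : ∀ v : Fin (k + 1 + 1) → L × (Fin k → K),
      M2 v = ∑ i, B (Function.update v i (B (Fin.snoc f (v i)))) := by
    intro v
    rw [hM2, MultilinearMap.sum_apply]
    refine Finset.sum_congr rfl (fun i _ => ?_)
    rw [MultilinearMap.compLinearMap_apply]
    refine congrArg (fun t => B t) (funext fun j => ?_)
    rcases eq_or_ne j i with rfl | hji
    · rw [if_pos rfl, Function.update_self]
      rfl
    · rw [if_neg hji, Function.update_of_ne hji]
      rfl
  have heq : M1 = M2 := by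
    refine Module.Basis.ext_multilinear (fun _ => bV) (fun v => ?_)
    have h0 := core h1 h2 f (fun i => bV (v i)) hSf (fun i => hSb (v i))
    unfold D at h0
    have h0' := sub_eq_zero.mp h0
    rw [happ2]
    exact h0'
  have hfin := congrArg (fun M => M g) heq
  rw [happ2] at hfin
  unfold D
  rw [← hfin]
  exact sub_self _

lemma stageB (h1 : H1 B) (h2 : H2 B) (f : Fin (k + 1) → L × (Fin k → K))
    (g : Fin (k + 2) → L × (Fin k → K)) : D B f g = 0 := by
  classical
  set bV : Module.Basis ((Module.Basis.ofVectorSpaceIndex K L) ⊕ Fin k) K (L × (Fin k → K)) :=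
    (Module.Basis.ofVectorSpace K L).prod (Pi.basisFun K (Fin k)) with hbV
  have hSb : ∀ p, ((bV p).1 = 0 ∨ (bV p).2 = 0) := by
    intro p
    rcases p with i | j
    · exact Or.inr (Module.Basis.prod_apply_inl_snd _ _ _)
    · exact Or.inl (Module.Basis.prod_apply_inr_fst _ _ _)
  set N1 : MultilinearMap K (fun _ : Fin (k + 1) => L × (Fin k → K)) (L × (Fin k → K)) :=
    (evalAt (B g)).compMultilinearMap B.toMultilinearMap.curryRight with hN1
  set N2 : MultilinearMap K (fun _ : Fin (k + 1) => L × (Fin k → K)) (L × (Fin k → K)) :=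
    ∑ i : Fin (k + 1 + 1), ((upd B g i).comp (evalAt (g i))).compMultilinearMap
      B.toMultilinearMap.curryRight with hN2
  have happ2 : ∀ v : Fin (k + 1) → L × (Fin k → K),
      N2 v = ∑ i, B (Function.update g i (B (Fin.snoc v (g i)))) := by
    intro v
    rw [hN2, MultilinearMap.sum_apply]
    exact Finset.sum_congr rfl (fun i _ => rfl)
  have heq : N1 = N2 := by
    refine Module.Basis.ext_multilinear (fun _ => bV) (fun v => ?_)
    have h0 := stageA h1 h2 (fun i => bV (v i)) (fun i => hSb (v i)) g
    unfold D at h0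
    have h0' := sub_eq_zero.mp h0
    rw [happ2]
    exact h0'
  have hfin := congrArg (fun M => M f) heq
  rw [happ2] at hfin
  unfold D
  rw [← hfin]
  exact sub_self _

end LTVAux


/-- On `V = 𝔤 × Kᵏ` the `(k+2)`-linear alternating bracket determined by
`[(y₁,0),(y₂,0),(0,e₁),…,(0,eₖ)] = ([y₁,y₂],0)`, and vanishing on tuples of elements of
`𝔤×{0} ∪ {0}×Kᵏ` unless exactly two arguments lie in `𝔤×{0}` (nontrivially) and the
remaining arguments span `{0}×Kᵏ`, satisfies the Filippov identity. -/
theorem lie_times_volume_is_filippov {K L : Type*} [Field K]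
    [LieRing L] [Module K L] [LieAlgebra K L] {k : ℕ} (hk : 1 ≤ k)
    (B : AlternatingMap K (L × (Fin k → K)) (L × (Fin k → K)) (Fin (k + 1 + 1)))
    (h1 : ∀ y₁ y₂ : L,
      B (Fin.cons (y₁, 0) (Fin.cons (y₂, 0) (fun i : Fin k => ((0 : L), Pi.single i (1 : K)))))
        = (⁅y₁, y₂⁆, 0))
    (h2 : ∀ v : Fin (k + 2) → L × (Fin k → K),
      (∀ i, (v i).1 = 0 ∨ (v i).2 = 0) →
      ¬ ((Finset.univ.filter fun i => (v i).1 ≠ 0 ∧ (v i).2 = 0).card = 2 ∧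
          Submodule.span K ((fun i => (v i).2) '' {i | (v i).1 = 0}) = ⊤) →
      B v = 0) :
    FilippovIdentity B := by
  intro f g
  have h0 := LTVAux.stageB (B := B) h1 h2 f g
  exact sub_eq_zero.mp h0
end

section
/- Let V = ℝᵐ with m ≥ n ≥ 2, and let Λ = ∂₁∧…∧∂_{n−1} ∧ X where X = Σ_{i,j≥n} a_{ij} x_j ∂_i is a linear vector field in the variables x_n,…,x_m (a_{ij} ∈ ℝ). Then the n-bracket {f₁,…,fₙ} = ⟨Λ, df₁∧…∧dfₙ⟩ on linear functions on ℝᵐ satisfies the Filippov identity, i.e. Λ is a Filippov tensor. -/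
open Matrix Finset

namespace LinNambuC


variable {N m : ℕ}

/-- The linear vector field `X` applied to the linear function with coefficients `c`. -/
def Dop (a : Fin m → Fin m → ℝ) (c : Fin m → ℝ) (t : Fin m) : ℝ := ∑ i' : Fin m, c i' * a i' t

/-- The matrix whose determinant is the bracket. -/
def Mmat (hm : N + 2 ≤ m) (a : Fin m → Fin m → ℝ) (c : Fin (N + 2) → Fin m → ℝ) (t : Fin m) :
    Matrix (Fin (N + 2)) (Fin (N + 2)) ℝ :=
  Matrix.of fun i j => if h : (j : ℕ) < N + 1 then c i ⟨(j : ℕ), lt_of_lt_of_le h (by omega)⟩ else Dop a (c i) t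

/-- Projection matrix: first `N+1` coordinates. -/
def Pm (hm : N + 2 ≤ m) (c : Fin (N + 1) → Fin m → ℝ) : Matrix (Fin (N + 1)) (Fin (N + 1)) ℝ :=
  Matrix.of fun i j => c i ⟨(j : ℕ), by omega⟩

lemma Dop_low {a : Fin m → Fin m → ℝ}
    (ha : ∀ i j : Fin m, ((i : ℕ) < N + 1 ∨ (j : ℕ) < N + 1) → a i j = 0)
    (c : Fin m → ℝ) {t : Fin m} (ht : (t : ℕ) < N + 1) : Dop a c t = 0 := by
  apply Finset.sum_eq_zero
  intro i' _
  rw [ha i' t (Or.inr ht), mul_zero]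

lemma br_low (hm : N + 2 ≤ m) {a : Fin m → Fin m → ℝ}
    (ha : ∀ i j : Fin m, ((i : ℕ) < N + 1 ∨ (j : ℕ) < N + 1) → a i j = 0)
    (c : Fin (N + 2) → Fin m → ℝ) {t : Fin m} (ht : (t : ℕ) < N + 1) :
    (Mmat hm a c t).det = 0 := by
  apply Matrix.det_eq_zero_of_column_eq_zero (Fin.last (N + 1))
  intro i
  simp only [Mmat, Matrix.of_apply, Fin.val_last]
  rw [dif_neg (by omega)]
  exact Dop_low ha _ ht

/-- Laplace expansion of the bracket matrix along the last column. -/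
lemma expand_col (hm : N + 2 ≤ m) (a : Fin m → Fin m → ℝ)
    (c : Fin (N + 2) → Fin m → ℝ) (t : Fin m) :
    (Mmat hm a c t).det =
      ∑ i : Fin (N + 2), (-1 : ℝ) ^ ((i : ℕ) + (N + 1)) * Dop a (c i) t *
        (Pm hm (fun r => c (i.succAbove r))).det := by
  rw [Matrix.det_succ_column (Mmat hm a c t) (Fin.last (N + 1))]
  refine Finset.sum_congr rfl fun i _ => ?_
  have h1 : (Mmat hm a c t) i (Fin.last (N + 1)) = Dop a (c i) t := by
    simp only [Mmat, Matrix.of_apply, Fin.val_last]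
    rw [dif_neg (by omega)]
  have h2 : (Mmat hm a c t).submatrix i.succAbove (Fin.last (N + 1)).succAbove =
      Pm hm (fun r => c (i.succAbove r)) := by
    ext r j
    simp only [Matrix.submatrix_apply, Fin.succAbove_last, Mmat, Pm, Matrix.of_apply]
    rw [dif_pos (by simp [Fin.is_lt]; omega)]
    rfl
  rw [h1, h2, Fin.val_last]

/-- Key vanishing identity: an alternating sum of `(N+1)×(N+1)` minors of `N+2` vectors
in an `(N+1)`-dimensional space, paired with a coordinate, vanishes. -/
lemma alt_vanish (hm : N + 2 ≤ m) (w : Fin (N + 2) → Fin m → ℝ) (c : Fin (N + 1)) :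
    ∑ i : Fin (N + 2), (-1 : ℝ) ^ ((i : ℕ) + (N + 1)) * w i ⟨(c : ℕ), by omega⟩ *
      (Pm hm (fun r => w (i.succAbove r))).det = 0 := by
  set E : Matrix (Fin (N + 2)) (Fin (N + 2)) ℝ :=
    Matrix.of fun i j => if h : (j : ℕ) < N + 1 then w i ⟨(j : ℕ), by omega⟩
      else w i ⟨(c : ℕ), by omega⟩ with hE
  have hdet : E.det = 0 := by
    apply Matrix.det_zero_of_column_eq (Fin.castSucc_lt_last c).ne
    intro k
    simp only [hE, Matrix.of_apply, Fin.coe_castSucc, Fin.val_last]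
    rw [dif_pos c.is_lt, dif_neg (by omega)]
  have hexp := Matrix.det_succ_column E (Fin.last (N + 1))
  rw [hdet] at hexp
  rw [← hexp.symm]
  · refine Finset.sum_congr rfl fun i _ => ?_
    have h1 : E i (Fin.last (N + 1)) = w i ⟨(c : ℕ), by omega⟩ := by
      simp only [hE, Matrix.of_apply, Fin.val_last]
      rw [dif_neg (by omega)]
    have h2 : E.submatrix i.succAbove (Fin.last (N + 1)).succAbove =
        Pm hm (fun r => w (i.succAbove r)) := by
      ext r j
      simp only [Matrix.submatrix_apply, Fin.succAbove_last, hE, Pm, Matrix.of_apply]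
      rw [dif_pos (by simp [Fin.is_lt]; omega)]
      rfl
    rw [h1, h2, Fin.val_last]

/-- Row expansion when the distinguished row vanishes on the first `N+1` coordinates:
case of the last row (`snoc`). -/
lemma sA (hm : N + 2 ≤ m) (a : Fin m → Fin m → ℝ) (f : Fin (N + 1) → Fin m → ℝ)
    (h : Fin m → ℝ) (hh : ∀ t : Fin m, (t : ℕ) < N + 1 → h t = 0) (t : Fin m) :
    (Mmat hm a (Fin.snoc f h) t).det = (Pm hm f).det * Dop a h t := by
  rw [Matrix.det_succ_row _ (Fin.last (N + 1)), Fin.sum_univ_castSucc]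
  have hz : ∀ j : Fin (N + 1),
      (-1 : ℝ) ^ ((Fin.last (N + 1) : ℕ) + ((Fin.castSucc j : Fin (N+2)) : ℕ)) *
        (Mmat hm a (Fin.snoc f h) t) (Fin.last (N + 1)) (Fin.castSucc j) *
        ((Mmat hm a (Fin.snoc f h) t).submatrix (Fin.last (N + 1)).succAbove
          (Fin.castSucc j).succAbove).det = 0 := by
    intro j
    have : (Mmat hm a (Fin.snoc f h) t) (Fin.last (N + 1)) (Fin.castSucc j) = 0 := by
      simp only [Mmat, Matrix.of_apply, Fin.coe_castSucc]
      rw [dif_pos j.is_lt, Fin.snoc_last]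
      exact hh _ j.is_lt
    rw [this, mul_zero, zero_mul]
  rw [Finset.sum_eq_zero fun j _ => hz j, zero_add]
  have h1 : (Mmat hm a (Fin.snoc f h) t) (Fin.last (N + 1)) (Fin.last (N + 1)) = Dop a h t := by
    simp only [Mmat, Matrix.of_apply, Fin.val_last]
    rw [dif_neg (by omega), Fin.snoc_last]
  have h2 : (Mmat hm a (Fin.snoc f h) t).submatrix (Fin.last (N + 1)).succAbove
      (Fin.last (N + 1)).succAbove = Pm hm f := by
    ext r j
    simp only [Matrix.submatrix_apply, Fin.succAbove_last, Mmat, Pm, Matrix.of_apply,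
      Fin.coe_castSucc]
    rw [dif_pos j.is_lt, Fin.snoc_castSucc]
  rw [h1, h2, Fin.val_last]
  have : (-1 : ℝ) ^ ((N + 1) + (N + 1)) = 1 := Even.neg_one_pow ⟨N + 1, rfl⟩
  rw [this]
  ring

/-- Row expansion when row `i` vanishes on the first `N+1` coordinates (`update`). -/
lemma sB (hm : N + 2 ≤ m) (a : Fin m → Fin m → ℝ) (g : Fin (N + 2) → Fin m → ℝ)
    (i : Fin (N + 2)) (k : Fin m → ℝ) (hk : ∀ t : Fin m, (t : ℕ) < N + 1 → k t = 0)
    (t : Fin m) :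
    (Mmat hm a (Function.update g i k) t).det =
      (-1 : ℝ) ^ ((i : ℕ) + (N + 1)) * (Pm hm (fun r => g (i.succAbove r))).det *
        Dop a k t := by
  rw [Matrix.det_succ_row _ i, Fin.sum_univ_castSucc]
  have hz : ∀ j : Fin (N + 1),
      (-1 : ℝ) ^ ((i : ℕ) + ((Fin.castSucc j : Fin (N+2)) : ℕ)) *
        (Mmat hm a (Function.update g i k) t) i (Fin.castSucc j) *
        ((Mmat hm a (Function.update g i k) t).submatrix i.succAbove
          (Fin.castSucc j).succAbove).det = 0 := by
    intro j
    have : (Mmat hm a (Function.update g i k) t) i (Fin.castSucc j) = 0 := by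
      simp only [Mmat, Matrix.of_apply, Fin.coe_castSucc]
      rw [dif_pos j.is_lt, Function.update_self]
      exact hk _ j.is_lt
    rw [this, mul_zero, zero_mul]
  rw [Finset.sum_eq_zero fun j _ => hz j, zero_add]
  have h1 : (Mmat hm a (Function.update g i k) t) i (Fin.last (N + 1)) = Dop a k t := by
    simp only [Mmat, Matrix.of_apply, Fin.val_last]
    rw [dif_neg (by omega), Function.update_self]
  have h2 : (Mmat hm a (Function.update g i k) t).submatrix i.succAbove
      (Fin.last (N + 1)).succAbove = Pm hm (fun r => g (i.succAbove r)) := by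
    ext r j
    simp only [Matrix.submatrix_apply, Fin.succAbove_last, Mmat, Pm, Matrix.of_apply,
      Fin.coe_castSucc]
    rw [dif_pos j.is_lt, Function.update_of_ne (Fin.succAbove_ne i r)]
  rw [h1, h2, Fin.val_last]
  ring

/-- The `i`-independent minors appearing in the split expansion. -/
def Bmat (hm : N + 2 ≤ m) (a : Fin m → Fin m → ℝ) (f : Fin (N + 1) → Fin m → ℝ)
    (c : Fin (N + 1)) (s : Fin m) : Matrix (Fin (N + 1)) (Fin (N + 1)) ℝ :=
  Matrix.of fun j j' =>
    if h : (((Fin.castSucc c).succAbove j' : Fin (N + 2)) : ℕ) < N + 1 then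
      f j ⟨(((Fin.castSucc c).succAbove j' : Fin (N + 2)) : ℕ), by omega⟩
    else Dop a (f j) s

lemma sE (hm : N + 2 ≤ m) (a : Fin m → Fin m → ℝ) (f : Fin (N + 1) → Fin m → ℝ)
    (gi : Fin m → ℝ) (s : Fin m) :
    (Mmat hm a (Fin.snoc f gi) s).det =
      Dop a gi s * (Pm hm f).det +
        ∑ c : Fin (N + 1), (-1 : ℝ) ^ ((N + 1) + (c : ℕ)) * gi ⟨(c : ℕ), by omega⟩ *
          (Bmat hm a f c s).det := by
  set M := Mmat hm a (Fin.snoc f gi) s with hMdef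
  set u : Fin (N + 2) → ℝ := fun r =>
    if h : (r : ℕ) < N + 1 then Dop a (f ⟨(r : ℕ), h⟩) s else 0 with hu
  set v : Fin (N + 2) → ℝ := fun r => if (r : ℕ) < N + 1 then 0 else Dop a gi s with hv
  have hM : M = M.updateCol (Fin.last (N + 1)) (v + u) := by
    ext r j
    by_cases hj : j = Fin.last (N + 1)
    · subst hj
      rw [Matrix.updateCol_self]
      simp only [Pi.add_apply, hu, hv]
      induction r using Fin.lastCases with
      | last =>
        rw [dif_neg (by simp), if_neg (by simp), add_zero]
        simp only [hMdef, Mmat, Matrix.of_apply, Fin.val_last]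
        rw [dif_neg (by omega), Fin.snoc_last]
      | cast i =>
        rw [dif_pos (by simpa using i.is_lt), if_pos (by simpa using i.is_lt), zero_add]
        simp only [hMdef, Mmat, Matrix.of_apply, Fin.val_last]
        rw [dif_neg (by omega), Fin.snoc_castSucc]
        exact congrArg (fun x => Dop a (f x) s) (Fin.ext rfl)
    · rw [Matrix.updateCol_ne hj]
  rw [hM, Matrix.det_updateCol_add]
  congr 1
  · -- v-part: Dop a gi s * (Pm hm f).det
    rw [Matrix.det_succ_column _ (Fin.last (N + 1)), Fin.sum_univ_castSucc]
    have hz : ∀ i : Fin (N + 1),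
        (-1 : ℝ) ^ (((Fin.castSucc i : Fin (N+2)) : ℕ) + ((Fin.last (N + 1)) : ℕ)) *
          (M.updateCol (Fin.last (N + 1)) v) (Fin.castSucc i) (Fin.last (N + 1)) *
          ((M.updateCol (Fin.last (N + 1)) v).submatrix (Fin.castSucc i).succAbove
            (Fin.last (N + 1)).succAbove).det = 0 := by
      intro i
      rw [Matrix.updateCol_self]
      simp only [hv]
      rw [if_pos (by simpa using i.is_lt)]
      ring
    rw [Finset.sum_eq_zero fun i _ => hz i, zero_add]
    rw [Matrix.updateCol_self]
    have h2 : (M.updateCol (Fin.last (N + 1)) v).submatrix (Fin.last (N + 1)).succAbove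
        (Fin.last (N + 1)).succAbove = Pm hm f := by
      ext r j
      simp only [Matrix.submatrix_apply, Fin.succAbove_last]
      rw [Matrix.updateCol_ne (by exact (Fin.castSucc_lt_last j).ne)]
      simp only [hMdef, Mmat, Pm, Matrix.of_apply, Fin.coe_castSucc]
      rw [dif_pos j.is_lt, Fin.snoc_castSucc]
    rw [h2]
    simp only [hv, Fin.val_last]
    rw [if_neg (by omega)]
    have : (-1 : ℝ) ^ ((N + 1) + (N + 1)) = 1 := Even.neg_one_pow ⟨N + 1, rfl⟩
    rw [this]
    ring
  · -- u-part: the sum over c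
    rw [Matrix.det_succ_row _ (Fin.last (N + 1)), Fin.sum_univ_castSucc]
    have hlast : (-1 : ℝ) ^ (((Fin.last (N + 1)) : ℕ) + ((Fin.last (N + 1)) : ℕ)) *
        (M.updateCol (Fin.last (N + 1)) u) (Fin.last (N + 1)) (Fin.last (N + 1)) *
        ((M.updateCol (Fin.last (N + 1)) u).submatrix (Fin.last (N + 1)).succAbove
          (Fin.last (N + 1)).succAbove).det = 0 := by
      rw [Matrix.updateCol_self]
      simp only [hu, Fin.val_last]
      rw [dif_neg (by omega)]
      ring
    rw [hlast, add_zero]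
    refine Finset.sum_congr rfl fun c _ => ?_
    have h1 : (M.updateCol (Fin.last (N + 1)) u) (Fin.last (N + 1)) (Fin.castSucc c) =
        gi ⟨(c : ℕ), by omega⟩ := by
      rw [Matrix.updateCol_ne (by exact (Fin.castSucc_lt_last c).ne)]
      simp only [hMdef, Mmat, Matrix.of_apply, Fin.coe_castSucc]
      rw [dif_pos c.is_lt, Fin.snoc_last]
    have h2 : (M.updateCol (Fin.last (N + 1)) u).submatrix (Fin.last (N + 1)).succAbove
        (Fin.castSucc c).succAbove = Bmat hm a f c s := by
      ext j j'
      simp only [Matrix.submatrix_apply, Fin.succAbove_last, Bmat, Matrix.of_apply]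
      by_cases h : (((Fin.castSucc c).succAbove j' : Fin (N + 2)) : ℕ) < N + 1
      · rw [dif_pos h]
        rw [Matrix.updateCol_ne (by
          intro hcol
          rw [hcol] at h
          simp [Fin.val_last] at h)]
        simp only [hMdef, Mmat, Matrix.of_apply]
        rw [dif_pos h, Fin.snoc_castSucc]
      · rw [dif_neg h]
        have hcol : (Fin.castSucc c).succAbove j' = Fin.last (N + 1) :=
          Fin.ext (by have := ((Fin.castSucc c).succAbove j').is_lt; simp only [Fin.val_last]; omega)
        rw [hcol, Matrix.updateCol_self]
        simp only [hu, Fin.coe_castSucc]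
        rw [dif_pos j.is_lt]
    rw [h1, h2, Fin.val_last, Fin.coe_castSucc]

lemma sF (hm : N + 2 ≤ m) (a : Fin m → Fin m → ℝ) (f : Fin (N + 1) → Fin m → ℝ)
    (g : Fin (N + 2) → Fin m → ℝ) (s : Fin m) :
    (Pm hm f).det * (Mmat hm a g s).det =
      ∑ i : Fin (N + 2), (-1 : ℝ) ^ ((i : ℕ) + (N + 1)) *
        (Pm hm (fun r => g (i.succAbove r))).det * (Mmat hm a (Fin.snoc f (g i)) s).det := by
  have hsplit : ∀ i : Fin (N + 2),
      (-1 : ℝ) ^ ((i : ℕ) + (N + 1)) * (Pm hm (fun r => g (i.succAbove r))).det *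
        (Mmat hm a (Fin.snoc f (g i)) s).det =
      (Pm hm f).det * ((-1 : ℝ) ^ ((i : ℕ) + (N + 1)) * Dop a (g i) s *
          (Pm hm (fun r => g (i.succAbove r))).det) +
        ∑ c : Fin (N + 1), ((-1 : ℝ) ^ ((N + 1) + (c : ℕ)) * (Bmat hm a f c s).det) *
          ((-1 : ℝ) ^ ((i : ℕ) + (N + 1)) * g i ⟨(c : ℕ), by omega⟩ *
            (Pm hm (fun r => g (i.succAbove r))).det) := by
    intro i
    rw [sE hm a f (g i) s, mul_add, Finset.mul_sum]
    congr 1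
    · ring
    · refine Finset.sum_congr rfl fun c _ => by ring
  rw [Finset.sum_congr rfl fun i _ => hsplit i, Finset.sum_add_distrib]
  have h2 : ∑ i : Fin (N + 2), ∑ c : Fin (N + 1),
      ((-1 : ℝ) ^ ((N + 1) + (c : ℕ)) * (Bmat hm a f c s).det) *
        ((-1 : ℝ) ^ ((i : ℕ) + (N + 1)) * g i ⟨(c : ℕ), by omega⟩ *
          (Pm hm (fun r => g (i.succAbove r))).det) = 0 := by
    rw [Finset.sum_comm]
    refine Finset.sum_eq_zero fun c _ => ?_
    rw [← Finset.mul_sum, alt_vanish hm g c, mul_zero]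
  rw [h2, add_zero, expand_col hm a g s, Finset.mul_sum]

end LinNambuC

/-- Case (C) of Corollary 2: on `ℝᵐ` with `m ≥ n = N+2 ≥ 2`, the linear `n`-vector field
`Λ = ∂₀ ∧ … ∧ ∂_{N} ∧ X`, where `X = ∑_{i,j ≥ N+1} a i j • x j • ∂ i` is a linear vector
field in the remaining variables, defines an `n`-bracket on linear functions
(represented by their coefficient vectors `c : Fin m → ℝ`, `f(x) = ∑ c i * x i`) by
`{f₁,…,fₙ}(x) = det (∂ⱼ fᵢ ∣ X(fᵢ))`, and this bracket satisfies the Filippov identity;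
i.e. `Λ` is a Filippov tensor. -/
theorem linear_nambu_case_C_is_filippov {N m : ℕ} (hm : N + 2 ≤ m)
    (a : Fin m → Fin m → ℝ)
    (ha : ∀ i j : Fin m, ((i : ℕ) < N + 1 ∨ (j : ℕ) < N + 1) → a i j = 0)
    (br : (Fin (N + 2) → Fin m → ℝ) → Fin m → ℝ)
    (hbr : ∀ (c : Fin (N + 2) → Fin m → ℝ) (t : Fin m),
      br c t = Matrix.det (Matrix.of fun i j : Fin (N + 2) =>
        if h : (j : ℕ) < N + 1 then c i ⟨(j : ℕ), by omega⟩
        else ∑ i' : Fin m, c i i' * a i' t)) :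
    ∀ (f : Fin (N + 1) → Fin m → ℝ) (g : Fin (N + 2) → Fin m → ℝ),
      br (Fin.snoc f (br g)) = ∑ i, br (Function.update g i (br (Fin.snoc f (g i)))) := by
  open LinNambuC in
  intro f g
  have key : ∀ (c : Fin (N + 2) → Fin m → ℝ) (t : Fin m),
      br c t = (Mmat hm a c t).det := hbr
  have hbrlow : ∀ (c : Fin (N + 2) → Fin m → ℝ) (t : Fin m), (t : ℕ) < N + 1 → br c t = 0 :=
    fun c t ht => (key c t).trans (br_low hm ha c ht)
  funext t
  rw [Finset.sum_apply]
  have hL : br (Fin.snoc f (br g)) t = (Pm hm f).det * Dop a (br g) t :=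
    (key _ t).trans (sA hm a f (br g) (hbrlow g) t)
  have hR : ∀ i : Fin (N + 2),
      br (Function.update g i (br (Fin.snoc f (g i)))) t =
        (-1 : ℝ) ^ ((i : ℕ) + (N + 1)) * (Pm hm (fun r => g (i.succAbove r))).det *
          Dop a (br (Fin.snoc f (g i))) t :=
    fun i => (key _ t).trans (sB hm a g i _ (hbrlow _) t)
  rw [hL, Finset.sum_congr rfl fun i _ => hR i]
  calc (Pm hm f).det * Dop a (br g) t
      = ∑ s : Fin m, ((Pm hm f).det * (Mmat hm a g s).det) * a s t := by
        show (Pm hm f).det * ∑ s : Fin m, br g s * a s t = _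
        rw [Finset.mul_sum]
        refine Finset.sum_congr rfl fun s _ => ?_
        rw [key g s]; ring
    _ = ∑ s : Fin m, (∑ i : Fin (N + 2), (-1 : ℝ) ^ ((i : ℕ) + (N + 1)) *
          (Pm hm (fun r => g (i.succAbove r))).det *
          (Mmat hm a (Fin.snoc f (g i)) s).det) * a s t := by
        refine Finset.sum_congr rfl fun s _ => ?_
        rw [sF hm a f g s]
    _ = ∑ i : Fin (N + 2), (-1 : ℝ) ^ ((i : ℕ) + (N + 1)) *
          (Pm hm (fun r => g (i.succAbove r))).det * Dop a (br (Fin.snoc f (g i))) t := by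
        simp only [Finset.sum_mul]
        rw [Finset.sum_comm]
        refine Finset.sum_congr rfl fun i _ => ?_
        show _ = (-1 : ℝ) ^ ((i : ℕ) + (N + 1)) * (Pm hm (fun r => g (i.succAbove r))).det *
          ∑ s : Fin m, br (Fin.snoc f (g i)) s * a s t
        rw [Finset.mul_sum]
        refine Finset.sum_congr rfl fun s _ => ?_
        rw [key (Fin.snoc f (g i)) s]; ring
end
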